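/- Let β ≥ 0 and let A = (a_{n,k}) be a lower triangular infinite matrix of nonnegative real numbers (a_{n,k} = 0 for k > n). Suppose there is a constant C, independent of n and m, such that Σ_{k=m}^{∞} (k+1)^β |a_{n,k}/(k+1)^β − a_{n,k+1}/(k+2)^β| ≤ C·a_{n,m} for all 0 ≤ m ≤ n. Then, uniformly in 0 < t ≤ π, |K_n(t)| := |Σ_{k=0}^{n} a_{n,k} · sin((k+1/2)t)/(2 sin(t/2))| = O( t^{-1} · Σ_{r=0}^{τ} a_{n,r} ), where τ = ⌊π/t⌋ and the implied constant is independent of n and t. -/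

import Mathlib

open Real MeasureTheory

/-- The kernel `K_n(t) = ∑_{k=0}^n a_{n,k} sin((k+1/2)t) / (2 sin(t/2))`. -/
noncomputable def kernelK (a : ℕ → ℕ → ℝ) (n : ℕ) (t : ℝ) : ℝ :=
  ∑ k ∈ Finset.range (n + 1), a n k * Real.sin (((k : ℝ) + 1 / 2) * t) / (2 * Real.sin (t / 2))

/-- Telescoping product-to-sum identity for sums of `sin((j+1/2)t)`. -/
lemma sin_sum_mul (t : ℝ) (m k : ℕ) :
    (∑ j ∈ Finset.range k, Real.sin (((m + j : ℕ) + 1 / 2) * t)) * (2 * Real.sin (t / 2))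
      = Real.cos ((m : ℝ) * t) - Real.cos (((m + k : ℕ) : ℝ) * t) := by
  induction k with
  | zero => simp
  | succ k ih =>
    rw [Finset.sum_range_succ, add_mul, ih]
    have key : Real.cos (((m + k : ℕ) : ℝ) * t) - Real.cos (((m + (k + 1) : ℕ) : ℝ) * t)
        = Real.sin (((m + k : ℕ) + 1 / 2) * t) * (2 * Real.sin (t / 2)) := by
      rw [Real.cos_sub_cos]
      have h1 : (((m + k : ℕ) : ℝ) * t + ((m + (k + 1) : ℕ) : ℝ) * t) / 2
          = (((m + k : ℕ) : ℝ) + 1 / 2) * t := by push_cast; ring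
      have h2 : (((m + k : ℕ) : ℝ) * t - ((m + (k + 1) : ℕ) : ℝ) * t) / 2 = -(t / 2) := by
        push_cast; ring
      rw [h1, h2, Real.sin_neg]
      ring
    linarith [key]

/-- Bound for partial sums of `sin((j+1/2)t)` when `sin(t/2) > 0`. -/
lemma sin_sum_bound (t : ℝ) (ht : 0 < Real.sin (t / 2)) (m k : ℕ) :
    |∑ j ∈ Finset.range k, Real.sin (((m + j : ℕ) + 1 / 2) * t)| ≤ 1 / Real.sin (t / 2) := by
  have h := sin_sum_mul t m k
  have h2 : |(∑ j ∈ Finset.range k, Real.sin (((m + j : ℕ) + 1 / 2) * t))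
      * (2 * Real.sin (t / 2))| ≤ 2 := by
    rw [h]
    have := Real.neg_one_le_cos ((m : ℝ) * t)
    have := Real.cos_le_one ((m : ℝ) * t)
    have := Real.neg_one_le_cos (((m + k : ℕ) : ℝ) * t)
    have := Real.cos_le_one (((m + k : ℕ) : ℝ) * t)
    rw [abs_le]; constructor <;> linarith
  rw [abs_mul, abs_of_pos (by linarith : (0:ℝ) < 2 * Real.sin (t / 2))] at h2
  rw [le_div_iff₀ ht]
  nlinarith [abs_nonneg (∑ j ∈ Finset.range k, Real.sin (((m + j : ℕ) + 1 / 2) * t))]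

/-- Bound for weighted partial sums `∑ (j+1)^β sin((j+1/2)t)`. -/
lemma weighted_sin_sum_bound (β : ℝ) (hβ : 0 ≤ β) (t : ℝ) (ht : 0 < Real.sin (t / 2))
    (m k : ℕ) :
    |∑ j ∈ Finset.range (k + 1), ((m + j : ℕ) + 1 : ℝ) ^ β * Real.sin (((m + j : ℕ) + 1 / 2) * t)|
      ≤ 2 * ((m + k : ℕ) + 1 : ℝ) ^ β * (1 / Real.sin (t / 2)) := by
  set f : ℕ → ℝ := fun j => ((m + j : ℕ) + 1 : ℝ) ^ β with hf
  set g : ℕ → ℝ := fun j => Real.sin (((m + j : ℕ) + 1 / 2) * t) with hg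
  have hfnn : ∀ j, 0 ≤ f j := fun j => Real.rpow_nonneg (by positivity) β
  have hfmono : ∀ i j : ℕ, i ≤ j → f i ≤ f j := by
    intro i j hij
    exact Real.rpow_le_rpow (by positivity) (by push_cast; norm_num; exact_mod_cast hij) hβ
  have hG : ∀ l : ℕ, |∑ j ∈ Finset.range l, g j| ≤ 1 / Real.sin (t / 2) :=
    fun l => sin_sum_bound t ht m l
  have habel := Finset.sum_range_by_parts f g (k + 1)
  simp only [smul_eq_mul, Nat.add_sub_cancel] at habel
  rw [habel]
  have hsum : |∑ i ∈ Finset.range k, (f (i + 1) - f i) * (∑ j ∈ Finset.range (i + 1), g j)|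
      ≤ (f k - f 0) * (1 / Real.sin (t / 2)) := by
    calc |∑ i ∈ Finset.range k, (f (i + 1) - f i) * (∑ j ∈ Finset.range (i + 1), g j)|
        ≤ ∑ i ∈ Finset.range k, |(f (i + 1) - f i) * (∑ j ∈ Finset.range (i + 1), g j)| :=
          Finset.abs_sum_le_sum_abs _ _
      _ ≤ ∑ i ∈ Finset.range k, (f (i + 1) - f i) * (1 / Real.sin (t / 2)) := by
          apply Finset.sum_le_sum
          intro i _
          rw [abs_mul, abs_of_nonneg (by linarith [hfmono i (i + 1) (Nat.le_succ i)])]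
          exact mul_le_mul_of_nonneg_left (hG (i + 1))
            (by linarith [hfmono i (i + 1) (Nat.le_succ i)])
      _ = (f k - f 0) * (1 / Real.sin (t / 2)) := by
          rw [← Finset.sum_mul, Finset.sum_range_sub (f := f)]
  have h1 : |f k * (∑ j ∈ Finset.range (k + 1), g j)| ≤ f k * (1 / Real.sin (t / 2)) := by
    rw [abs_mul, abs_of_nonneg (hfnn k)]
    exact mul_le_mul_of_nonneg_left (hG (k + 1)) (hfnn k)
  calc |f k * (∑ j ∈ Finset.range (k + 1), g j)
        - ∑ i ∈ Finset.range k, (f (i + 1) - f i) * (∑ j ∈ Finset.range (i + 1), g j)|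
      ≤ f k * (1 / Real.sin (t / 2)) + (f k - f 0) * (1 / Real.sin (t / 2)) := by
        calc |f k * (∑ j ∈ Finset.range (k + 1), g j)
              - ∑ i ∈ Finset.range k, (f (i + 1) - f i) * (∑ j ∈ Finset.range (i + 1), g j)|
            ≤ |f k * (∑ j ∈ Finset.range (k + 1), g j)|
              + |∑ i ∈ Finset.range k, (f (i + 1) - f i) * (∑ j ∈ Finset.range (i + 1), g j)| :=
              abs_sub _ _
          _ ≤ _ := add_le_add h1 hsum
    _ ≤ 2 * f k * (1 / Real.sin (t / 2)) := by
        have h0 : 0 ≤ f 0 := hfnn 0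
        have hM : 0 ≤ 1 / Real.sin (t / 2) := by positivity
        nlinarith


/-- The summand in the hypothesis `hA`. -/
noncomputable def termA (β : ℝ) (a : ℕ → ℕ → ℝ) (n m k : ℕ) : ℝ :=
  ((m : ℝ) + (k : ℝ) + 1) ^ β *
    |a n (m + k) / ((m : ℝ) + (k : ℝ) + 1) ^ β -
      a n (m + k + 1) / ((m : ℝ) + (k : ℝ) + 2) ^ β|

lemma termA_nonneg (β : ℝ) (a : ℕ → ℕ → ℝ) (n m k : ℕ) : 0 ≤ termA β a n m k := by
  unfold termA
  positivity

lemma abs_telescope (f : ℕ → ℝ) (j : ℕ) :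
    |f 0 - f j| ≤ ∑ k ∈ Finset.range j, |f k - f (k + 1)| := by
  induction j with
  | zero => simp
  | succ j ih =>
    rw [Finset.sum_range_succ]
    calc |f 0 - f (j + 1)| ≤ |f 0 - f j| + |f j - f (j + 1)| := abs_sub_le _ _ _
      _ ≤ _ := add_le_add_left ih _

lemma comp_lemma (β : ℝ) (hβ : 0 ≤ β) (a : ℕ → ℕ → ℝ)
    (C : ℝ) (n r : ℕ)
    (hpart : ∀ s : Finset ℕ, ∑ k ∈ s, termA β a n r k ≤ C * a n r) (j : ℕ) :
    a n (r + j) / ((r : ℝ) + (j : ℝ) + 1) ^ β ≤ (1 + C) * (a n r / ((r : ℝ) + 1) ^ β) := by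
  set b : ℕ → ℝ := fun k => a n (r + k) / ((r : ℝ) + (k : ℝ) + 1) ^ β with hb
  set P : ℝ := ((r : ℝ) + 1) ^ β with hP
  have hPpos : 0 < P := Real.rpow_pos_of_pos (by positivity) β
  have hstep : ∀ k : ℕ, P * |b k - b (k + 1)| ≤ termA β a n r k := by
    intro k
    have hbk1 : b (k + 1) = a n (r + k + 1) / ((r : ℝ) + (k : ℝ) + 2) ^ β := by
      show a n (r + (k + 1)) / ((r : ℝ) + ((k : ℕ) + 1 : ℕ) + 1) ^ β = _
      have h1 : r + (k + 1) = r + k + 1 := by omega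
      have h2 : ((r : ℝ) + ((k : ℕ) + 1 : ℕ) + 1) = ((r : ℝ) + (k : ℝ) + 2) := by
        push_cast; ring
      rw [h1, h2]
    have hbk : b k = a n (r + k) / ((r : ℝ) + (k : ℝ) + 1) ^ β := rfl
    unfold termA
    rw [← hbk1, ← hbk]
    apply mul_le_mul_of_nonneg_right _ (abs_nonneg _)
    apply Real.rpow_le_rpow (by positivity) _ hβ
    have : (0:ℝ) ≤ (k : ℝ) := Nat.cast_nonneg k
    linarith
  have htel := abs_telescope b j
  have hsum : ∑ k ∈ Finset.range j, P * |b k - b (k + 1)| ≤ C * a n r :=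
    le_trans (Finset.sum_le_sum fun k _ => hstep k) (hpart (Finset.range j))
  have h2 : P * |b 0 - b j| ≤ C * a n r := by
    calc P * |b 0 - b j| ≤ P * ∑ k ∈ Finset.range j, |b k - b (k + 1)| :=
          mul_le_mul_of_nonneg_left htel hPpos.le
      _ = ∑ k ∈ Finset.range j, P * |b k - b (k + 1)| := Finset.mul_sum _ _ _
      _ ≤ C * a n r := hsum
  have hb0 : b 0 = a n r / P := by
    show a n (r + 0) / ((r : ℝ) + ((0:ℕ) : ℝ) + 1) ^ β = _
    norm_num
    rfl
  have h3 : |b 0 - b j| ≤ C * a n r / P := by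
    rw [le_div_iff₀ hPpos]
    linarith [h2]
  have h4 : b j ≤ b 0 + |b 0 - b j| := by
    have := le_abs_self (b j - b 0)
    rw [abs_sub_comm] at this
    linarith
  calc b j ≤ b 0 + |b 0 - b j| := h4
    _ ≤ a n r / P + C * a n r / P := by rw [hb0] at h3 ⊢; linarith
    _ = (1 + C) * (a n r / P) := by ring

lemma tail_bound (β : ℝ) (hβ : 0 ≤ β) (a : ℕ → ℕ → ℝ)
    (htri : ∀ n k : ℕ, n < k → a n k = 0)
    (C : ℝ) (n m : ℕ) (hm : m ≤ n) (t : ℝ) (ht : 0 < Real.sin (t / 2))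
    (hpart : ∀ s : Finset ℕ, ∑ k ∈ s, termA β a n m k ≤ C * a n m) :
    |∑ j ∈ Finset.range (n + 2 - m), a n (m + j) * Real.sin (((m + j : ℕ) + 1 / 2) * t)|
      ≤ 2 * (1 / Real.sin (t / 2)) * (C * a n m) := by
  set c : ℕ → ℝ := fun j => ((m + j : ℕ) + 1 : ℝ) ^ β with hc
  set g : ℕ → ℝ := fun j => Real.sin (((m + j : ℕ) + 1 / 2) * t) with hg
  set b : ℕ → ℝ := fun j => a n (m + j) / c j with hb
  have hcpos : ∀ j, 0 < c j := fun j => Real.rpow_pos_of_pos (by positivity) β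
  have hrepr : ∀ j ∈ Finset.range (n + 2 - m),
      a n (m + j) * Real.sin (((m + j : ℕ) + 1 / 2) * t) = b j • (c j * g j) := by
    intro j _
    rw [smul_eq_mul, hb, div_mul_eq_mul_div, mul_comm (c j) (g j), ← mul_assoc,
      mul_div_assoc, div_self (hcpos j).ne', mul_one]
  rw [Finset.sum_congr rfl hrepr, Finset.sum_range_by_parts]
  have hK : n + 2 - m - 1 = n + 1 - m := by omega
  rw [hK]
  have hbtop : b (n + 1 - m) = 0 := by
    rw [hb]
    have : m + (n + 1 - m) = n + 1 := by omega
    simp only [this, htri n (n + 1) (Nat.lt_succ_self n), zero_div]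
  rw [hbtop, zero_smul, zero_sub, abs_neg]
  have hterm : ∀ i : ℕ, c i * |b (i + 1) - b i| = termA β a n m i := by
    intro i
    have hbk1 : b (i + 1) = a n (m + i + 1) / ((m : ℝ) + (i : ℝ) + 2) ^ β := by
      show a n (m + (i + 1)) / (((m + (i + 1) : ℕ) : ℝ) + 1) ^ β = _
      have h1 : m + (i + 1) = m + i + 1 := by omega
      have h2 : (((m + i + 1 : ℕ) : ℝ) + 1) = ((m : ℝ) + (i : ℝ) + 2) := by
        push_cast; ring
      rw [h1, h2]
    have hbk : b i = a n (m + i) / ((m : ℝ) + (i : ℝ) + 1) ^ β := by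
      show a n (m + i) / (((m + i : ℕ) : ℝ) + 1) ^ β = _
      have h2 : (((m + i : ℕ) : ℝ) + 1) = ((m : ℝ) + (i : ℝ) + 1) := by push_cast; ring
      rw [h2]
    have hcid : c i = ((m : ℝ) + (i : ℝ) + 1) ^ β := by
      show (((m + i : ℕ) : ℝ) + 1) ^ β = _
      have h2 : (((m + i : ℕ) : ℝ) + 1) = ((m : ℝ) + (i : ℝ) + 1) := by push_cast; ring
      rw [h2]
    unfold termA
    rw [hbk1, hbk, hcid, abs_sub_comm]
  calc |∑ i ∈ Finset.range (n + 1 - m), (b (i + 1) - b i) • ∑ j ∈ Finset.range (i + 1), c j * g j|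
      ≤ ∑ i ∈ Finset.range (n + 1 - m),
          |(b (i + 1) - b i) * ∑ j ∈ Finset.range (i + 1), c j * g j| :=
        Finset.abs_sum_le_sum_abs _ _
    _ ≤ ∑ i ∈ Finset.range (n + 1 - m),
          (2 * (1 / Real.sin (t / 2))) * (c i * |b (i + 1) - b i|) := by
        apply Finset.sum_le_sum
        intro i _
        rw [abs_mul]
        have hW := weighted_sin_sum_bound β hβ t ht m i
        calc |b (i + 1) - b i| * |∑ j ∈ Finset.range (i + 1), c j * g j|
            ≤ |b (i + 1) - b i| * (2 * ((m + i : ℕ) + 1 : ℝ) ^ β * (1 / Real.sin (t / 2))) :=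
              mul_le_mul_of_nonneg_left hW (abs_nonneg _)
          _ = (2 * (1 / Real.sin (t / 2))) * (c i * |b (i + 1) - b i|) := by
              rw [hc]; ring
    _ = (2 * (1 / Real.sin (t / 2))) * ∑ i ∈ Finset.range (n + 1 - m), termA β a n m i := by
        rw [← Finset.mul_sum]
        congr 1
        exact Finset.sum_congr rfl fun i _ => hterm i
    _ ≤ 2 * (1 / Real.sin (t / 2)) * (C * a n m) := by
        apply mul_le_mul_of_nonneg_left (hpart (Finset.range (n + 1 - m)))
        positivity

lemma counting_lemma (β : ℝ) (hβ : 0 ≤ β) (a : ℕ → ℕ → ℝ)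
    (hnn : ∀ n k : ℕ, 0 ≤ a n k) (C : ℝ) (hC : 0 ≤ C) (n τ : ℕ)
    (hcomp : ∀ r j : ℕ,
      a n (r + j) / ((r : ℝ) + (j : ℝ) + 1) ^ β ≤ (1 + C) * (a n r / ((r : ℝ) + 1) ^ β)) :
    ((τ : ℝ) + 1) * a n (τ + 1)
      ≤ 2 * ((1 + C) * (4 : ℝ) ^ β) * ∑ r ∈ Finset.range (τ + 1), a n r := by
  have h4β : (0:ℝ) < (4 : ℝ) ^ β := Real.rpow_pos_of_pos (by norm_num) β
  have key : ∀ r ∈ Finset.Icc (τ / 2) τ, a n (τ + 1) ≤ ((1 + C) * (4 : ℝ) ^ β) * a n r := by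
    intro r hr
    rw [Finset.mem_Icc] at hr
    obtain ⟨hr1, hr2⟩ := hr
    have hj := hcomp r (τ + 1 - r)
    have hidx : r + (τ + 1 - r) = τ + 1 := by omega
    have hcast : ((r : ℝ) + ((τ + 1 - r : ℕ) : ℝ) + 1) = (τ : ℝ) + 2 := by
      have : ((τ + 1 - r : ℕ) : ℝ) = (τ : ℝ) + 1 - (r : ℝ) := by
        have : r ≤ τ + 1 := by omega
        push_cast [Nat.cast_sub this]
        ring
      rw [this]; ring
    rw [hidx, hcast] at hj
    have hQpos : (0:ℝ) < ((r : ℝ) + 1) ^ β := Real.rpow_pos_of_pos (by positivity) β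
    have hPpos : (0:ℝ) < ((τ : ℝ) + 2) ^ β := Real.rpow_pos_of_pos (by positivity) β
    have hPQ : ((τ : ℝ) + 2) ^ β ≤ (4 : ℝ) ^ β * ((r : ℝ) + 1) ^ β := by
      rw [← Real.mul_rpow (by norm_num) (by positivity)]
      apply Real.rpow_le_rpow (by positivity) _ hβ
      have : (τ : ℝ) + 2 ≤ 4 * ((r : ℝ) + 1) := by
        have hnat : τ + 2 ≤ 4 * (r + 1) := by omega
        exact_mod_cast hnat
      linarith
    have h5 : a n (τ + 1) ≤ (1 + C) * (a n r / ((r : ℝ) + 1) ^ β) * ((τ : ℝ) + 2) ^ β := by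
      rw [div_le_iff₀ hPpos] at hj
      linarith
    calc a n (τ + 1)
        ≤ (1 + C) * (a n r / ((r : ℝ) + 1) ^ β) * ((τ : ℝ) + 2) ^ β := h5
      _ ≤ (1 + C) * (a n r / ((r : ℝ) + 1) ^ β) * ((4 : ℝ) ^ β * ((r : ℝ) + 1) ^ β) := by
          apply mul_le_mul_of_nonneg_left hPQ
          have := hnn n r
          positivity
      _ = ((1 + C) * (4 : ℝ) ^ β) * a n r := by
          field_simp
  have hcard : (Finset.Icc (τ / 2) τ).card = τ + 1 - τ / 2 := Nat.card_Icc _ _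
  have hsub : Finset.Icc (τ / 2) τ ⊆ Finset.range (τ + 1) := by
    intro x hx
    rw [Finset.mem_Icc] at hx
    rw [Finset.mem_range]
    omega
  have hstep1 : ((τ + 1 - τ / 2 : ℕ) : ℝ) * a n (τ + 1)
      ≤ ((1 + C) * (4 : ℝ) ^ β) * ∑ r ∈ Finset.range (τ + 1), a n r := by
    calc ((τ + 1 - τ / 2 : ℕ) : ℝ) * a n (τ + 1)
        = ∑ _r ∈ Finset.Icc (τ / 2) τ, a n (τ + 1) := by
          rw [Finset.sum_const, hcard]; simp [mul_comm]
      _ ≤ ∑ r ∈ Finset.Icc (τ / 2) τ, ((1 + C) * (4 : ℝ) ^ β) * a n r :=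
          Finset.sum_le_sum key
      _ = ((1 + C) * (4 : ℝ) ^ β) * ∑ r ∈ Finset.Icc (τ / 2) τ, a n r := by
          rw [Finset.mul_sum]
      _ ≤ ((1 + C) * (4 : ℝ) ^ β) * ∑ r ∈ Finset.range (τ + 1), a n r := by
          apply mul_le_mul_of_nonneg_left _ (by positivity)
          exact Finset.sum_le_sum_of_subset_of_nonneg hsub fun i _ _ => hnn n i
  have hfac : ((τ : ℝ) + 1) ≤ 2 * ((τ + 1 - τ / 2 : ℕ) : ℝ) := by
    have hnat : τ + 1 ≤ 2 * (τ + 1 - τ / 2) := by omega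
    exact_mod_cast hnat
  calc ((τ : ℝ) + 1) * a n (τ + 1) ≤ 2 * ((τ + 1 - τ / 2 : ℕ) : ℝ) * a n (τ + 1) :=
        mul_le_mul_of_nonneg_right hfac (hnn n (τ + 1))
    _ ≤ 2 * (((1 + C) * (4 : ℝ) ^ β) * ∑ r ∈ Finset.range (τ + 1), a n r) := by
        rw [mul_assoc]
        exact mul_le_mul_of_nonneg_left hstep1 (by norm_num)
    _ = 2 * ((1 + C) * (4 : ℝ) ^ β) * ∑ r ∈ Finset.range (τ + 1), a n r := by ring

theorem kernel_est_RBV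
    (β : ℝ) (hβ : 0 ≤ β)
    (a : ℕ → ℕ → ℝ) (htri : ∀ n k : ℕ, n < k → a n k = 0)
    (hnn : ∀ n k : ℕ, 0 ≤ a n k)
    (C : ℝ) (hC : 0 < C)
    (hA : ∀ n m : ℕ, m ≤ n →
      ∑' k : ℕ,
        ((m : ℝ) + (k : ℝ) + 1) ^ β *
          |a n (m + k) / ((m : ℝ) + (k : ℝ) + 1) ^ β -
            a n (m + k + 1) / ((m : ℝ) + (k : ℝ) + 2) ^ β|
        ≤ C * a n m)
    :
    ∃ C' : ℝ, 0 < C' ∧ ∀ (n : ℕ) (t : ℝ), 0 < t → t ≤ Real.pi →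
      |kernelK a n t| ≤ C' * (t⁻¹ * ∑ r ∈ Finset.range (⌊Real.pi / t⌋₊ + 1), a n r) :=  by
  refine ⟨Real.pi / 2 + 2 * Real.pi * C * (1 + C) * (4 : ℝ) ^ β, ?_, ?_⟩
  · have h4 : (0:ℝ) < (4:ℝ) ^ β := Real.rpow_pos_of_pos (by norm_num) β
    have hπ := Real.pi_pos
    have h1 : 0 < 2 * Real.pi * C * (1 + C) * (4 : ℝ) ^ β := by positivity
    linarith
  intro n t ht htπ
  have hπ := Real.pi_pos
  set τ := ⌊Real.pi / t⌋₊ with hτdef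
  have hs : 0 < Real.sin (t / 2) :=
    Real.sin_pos_of_pos_of_lt_pi (by linarith) (by linarith)
  have hsM : 1 / Real.sin (t / 2) ≤ Real.pi / t := by
    have h1 : t / Real.pi ≤ Real.sin (t / 2) := by
      have h2 := Real.mul_le_sin (x := t / 2) (by linarith) (by linarith)
      calc t / Real.pi = 2 / Real.pi * (t / 2) := by ring
        _ ≤ _ := h2
    calc 1 / Real.sin (t / 2) ≤ 1 / (t / Real.pi) :=
          one_div_le_one_div_of_le (by positivity) h1
      _ = Real.pi / t := one_div_div _ _
  have hτt : Real.pi / t < (τ : ℝ) + 1 := Nat.lt_floor_add_one _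
  set S := ∑ r ∈ Finset.range (τ + 1), a n r with hSdef
  have hSnn : 0 ≤ S := Finset.sum_nonneg fun r _ => hnn n r
  have hker : kernelK a n t
      = (∑ k ∈ Finset.range (n + 1), a n k * Real.sin (((k : ℝ) + 1 / 2) * t))
        / (2 * Real.sin (t / 2)) := by
    simp only [kernelK]
    rw [Finset.sum_div]
  have habs : ∀ s : Finset ℕ,
      |∑ k ∈ s, a n k * Real.sin (((k : ℝ) + 1 / 2) * t)| ≤ ∑ k ∈ s, a n k := by
    intro s
    calc |∑ k ∈ s, a n k * Real.sin (((k : ℝ) + 1 / 2) * t)|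
        ≤ ∑ k ∈ s, |a n k * Real.sin (((k : ℝ) + 1 / 2) * t)| :=
          Finset.abs_sum_le_sum_abs _ _
      _ ≤ ∑ k ∈ s, a n k := by
          apply Finset.sum_le_sum
          intro k _
          rw [abs_mul, abs_of_nonneg (hnn n k)]
          exact mul_le_of_le_one_right (hnn n k)
            (abs_le.mpr ⟨Real.neg_one_le_sin _, Real.sin_le_one _⟩)
  set M := 1 / Real.sin (t / 2) with hMdef
  have hMpos : 0 < M := by positivity
  by_cases hcase : n ≤ τ
  · -- everything is in the head
    have hsub : Finset.range (n + 1) ⊆ Finset.range (τ + 1) :=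
      Finset.range_subset_range.mpr (by omega)
    have h1 : |∑ k ∈ Finset.range (n + 1), a n k * Real.sin (((k : ℝ) + 1 / 2) * t)| ≤ S :=
      le_trans (habs _)
        (Finset.sum_le_sum_of_subset_of_nonneg hsub fun i _ _ => hnn n i)
    calc |kernelK a n t|
        = |∑ k ∈ Finset.range (n + 1), a n k * Real.sin (((k : ℝ) + 1 / 2) * t)|
          / (2 * Real.sin (t / 2)) := by
          rw [hker, abs_div, abs_of_pos (by linarith : (0:ℝ) < 2 * Real.sin (t / 2))]
      _ ≤ S / (2 * Real.sin (t / 2)) := by gcongr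
      _ = S * (M / 2) := by rw [hMdef]; ring
      _ ≤ S * (Real.pi / t / 2) := by
          apply mul_le_mul_of_nonneg_left _ hSnn
          linarith [hsM]
      _ = Real.pi / 2 * (t⁻¹ * S) := by field_simp
      _ ≤ (Real.pi / 2 + 2 * Real.pi * C * (1 + C) * (4 : ℝ) ^ β) * (t⁻¹ * S) := by
          apply mul_le_mul_of_nonneg_right _ (by positivity)
          have h5 : (0:ℝ) < 2 * Real.pi * C * (1 + C) * (4:ℝ) ^ β := by positivity
          linarith
  · -- tail case : τ + 1 ≤ n
    have hτn : τ + 1 ≤ n := by omega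
    have hpart : ∀ m : ℕ, m ≤ n → ∀ s : Finset ℕ,
        ∑ k ∈ s, termA β a n m k ≤ C * a n m := by
      intro m hm s
      have hsummable : Summable (termA β a n m) := by
        apply summable_of_ne_finset_zero (s := Finset.range (n + 1))
        intro k hk
        rw [Finset.mem_range, not_lt] at hk
        unfold termA
        rw [htri n (m + k) (by omega), htri n (m + k + 1) (by omega)]
        simp
      refine le_trans (Summable.sum_le_tsum s (fun k _ => termA_nonneg β a n m k) hsummable) ?_
      simpa [termA] using hA n m hm
    have hcomp : ∀ r j : ℕ,
        a n (r + j) / ((r : ℝ) + (j : ℝ) + 1) ^ β ≤ (1 + C) * (a n r / ((r : ℝ) + 1) ^ β) := by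
      intro r j
      by_cases hr : r ≤ n
      · exact comp_lemma β hβ a C n r (fun s => hpart r hr s) j
      · rw [htri n (r + j) (by omega), zero_div]
        have h1 := hnn n r
        positivity
    have hcount := counting_lemma β hβ a hnn C hC.le n τ hcomp
    rw [← hSdef] at hcount
    have htailb := tail_bound β hβ a htri C n (τ + 1) hτn t hs (hpart (τ + 1) hτn)
    have htail2 : |∑ k ∈ Finset.Ico (τ + 1) (n + 1), a n k * Real.sin (((k : ℝ) + 1 / 2) * t)|
        ≤ 2 * M * (C * a n (τ + 1)) := by
      rw [Finset.sum_Ico_eq_sum_range]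
      have hrange : n + 2 - (τ + 1) = (n + 1 - (τ + 1)) + 1 := by omega
      rw [hrange, Finset.sum_range_succ] at htailb
      have h0 : a n (τ + 1 + (n + 1 - (τ + 1)))
          * Real.sin ((((τ + 1 + (n + 1 - (τ + 1)) : ℕ) : ℝ) + 1 / 2) * t) = 0 := by
        rw [show τ + 1 + (n + 1 - (τ + 1)) = n + 1 by omega, htri n (n + 1) (by omega), zero_mul]
      rw [h0, add_zero] at htailb
      rw [hMdef]
      exact htailb
    have hsplit : ∑ k ∈ Finset.range (n + 1), a n k * Real.sin (((k : ℝ) + 1 / 2) * t)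
        = (∑ k ∈ Finset.range (τ + 1), a n k * Real.sin (((k : ℝ) + 1 / 2) * t))
          + ∑ k ∈ Finset.Ico (τ + 1) (n + 1), a n k * Real.sin (((k : ℝ) + 1 / 2) * t) :=
      (Finset.sum_range_add_sum_Ico _ (by omega : τ + 1 ≤ n + 1)).symm
    have hXnn : 0 ≤ C * a n (τ + 1) := mul_nonneg hC.le (hnn n (τ + 1))
    have hMle : M ≤ Real.pi / t := by rw [hMdef]; exact hsM
    have hMle2 : M ≤ (τ : ℝ) + 1 := le_trans hMle hτt.le
    calc |kernelK a n t|
        = |∑ k ∈ Finset.range (n + 1), a n k * Real.sin (((k : ℝ) + 1 / 2) * t)|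
          / (2 * Real.sin (t / 2)) := by
          rw [hker, abs_div, abs_of_pos (by linarith : (0:ℝ) < 2 * Real.sin (t / 2))]
      _ ≤ (S + 2 * M * (C * a n (τ + 1))) / (2 * Real.sin (t / 2)) := by
          gcongr
          rw [hsplit]
          exact le_trans (abs_add_le _ _) (add_le_add (le_trans (habs _) (le_of_eq hSdef.symm)) htail2)
      _ = S * (M / 2) + M * (M * (C * a n (τ + 1))) := by
          rw [hMdef]; field_simp
      _ ≤ S * (Real.pi / t / 2) + (Real.pi / t) * (((τ : ℝ) + 1) * (C * a n (τ + 1))) := by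
          apply add_le_add
          · exact mul_le_mul_of_nonneg_left (by linarith) hSnn
          · calc M * (M * (C * a n (τ + 1)))
                ≤ (Real.pi / t) * (M * (C * a n (τ + 1))) :=
                  mul_le_mul_of_nonneg_right hMle (mul_nonneg hMpos.le hXnn)
              _ ≤ (Real.pi / t) * (((τ : ℝ) + 1) * (C * a n (τ + 1))) := by
                  apply mul_le_mul_of_nonneg_left _ (by positivity)
                  exact mul_le_mul_of_nonneg_right hMle2 hXnn
      _ ≤ S * (Real.pi / t / 2) + (Real.pi / t) * (C * (2 * ((1 + C) * (4 : ℝ) ^ β) * S)) := by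
          apply add_le_add_right
          have heq : ((τ : ℝ) + 1) * (C * a n (τ + 1)) = C * (((τ : ℝ) + 1) * a n (τ + 1)) := by
            ring
          rw [heq]
          apply mul_le_mul_of_nonneg_left _ (by positivity)
          apply mul_le_mul_of_nonneg_left _ hC.le
          calc ((τ : ℝ) + 1) * a n (τ + 1)
              ≤ 2 * ((1 + C) * (4 : ℝ) ^ β) * S := hcount
            _ = 2 * ((1 + C) * (4 : ℝ) ^ β) * S := rfl
      _ = (Real.pi / 2 + 2 * Real.pi * C * (1 + C) * (4 : ℝ) ^ β) * (t⁻¹ * S) := by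
          field_simp
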